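/- Let p be an odd prime, β ≥ 1, let a ∈ ℤ/p^βℤ with p dividing a, and let b be a unit of ℤ/p^βℤ. Then the Salié sum satisfies | Σ_{x ∈ (ℤ/p^βℤ)^×} η(x) · exp(2πi(a x^{−1} + b x)/p^β) | ≤ p^{β/2}, where η(x) denotes the Legendre symbol (x mod p / p). -/

import Mathlib

noncomputable def eZMod (q : ℕ) (c : ZMod q) : ℂ :=
  Complex.exp (2 * Real.pi * Complex.I * c.val / q)

lemma eZMod_eq (q : ℕ) [NeZero q] (c : ZMod q) : eZMod q c = ZMod.stdAddChar c := by
  rw [ZMod.stdAddChar_apply, ZMod.toCircle_apply, eZMod]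

lemma aux1 (p q : ℕ) [Fact p.Prime] [NeZero q] (hpq : q = p) (hodd : Odd p) (b : ZMod q)
    (hb : IsUnit b) :
    ‖(∑ x : (ZMod q)ˣ, (legendreSym p ((x : ZMod q).val) : ℂ) * eZMod q (b * x))‖ ≤
      (p : ℝ) ^ ((1:ℝ) / 2) := by
  subst hpq
  set χ : MulChar (ZMod q) ℂ := (quadraticChar (ZMod q)).ringHomComp (Int.castRingHom ℂ) with hχ
  have hq2 : ringChar (ZMod q) ≠ 2 := by
    rw [ZMod.ringChar_zmod_n]
    intro h
    rw [h] at hodd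
    exact (Nat.not_odd_iff_even.mpr even_two) hodd
  have hχ1 : χ ≠ 1 :=
    (MulChar.ringHomComp_ne_one_iff Int.cast_injective).mpr (quadraticChar_ne_one hq2)
  have hχ2 : χ.IsQuadratic := (quadraticChar_isQuadratic (ZMod q)).comp _
  have hψ := ZMod.isPrimitive_stdAddChar q
  set ψ : AddChar (ZMod q) ℂ := ZMod.stdAddChar with hψdef
  set b' : (ZMod q)ˣ := hb.unit with hb'
  have habsu : ∀ u : (ZMod q)ˣ, ‖χ ↑u‖ = 1 := by
    intro u
    have hne : χ ↑u ≠ 0 := by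
      intro h
      have h1 : χ ((u : ZMod q) * ↑u⁻¹) = 1 := by rw [Units.mul_inv]; exact χ.map_one
      rw [map_mul, h, zero_mul] at h1
      exact zero_ne_one h1
    rcases hχ2 ↑u with h | h | h
    · exact absurd h hne
    · rw [h]; simp
    · rw [h]; simp
  -- rewrite the sum as a Gauss sum
  have hsum : ∑ x : (ZMod q)ˣ, (legendreSym q ((x : ZMod q).val) : ℂ) * eZMod q (b * x)
      = gaussSum χ (ψ.mulShift b) := by
    rw [gaussSum,
      ← Finset.sum_subset
        (Finset.subset_univ (Finset.univ.image (fun u : (ZMod q)ˣ => (u : ZMod q))))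
        (fun x _ hx => by
          have hnu : ¬ IsUnit x := fun hu =>
            hx (Finset.mem_image.mpr ⟨hu.unit, Finset.mem_univ _, hu.unit_spec⟩)
          rw [χ.map_nonunit hnu, zero_mul]),
      Finset.sum_image (fun x _ y _ h => Units.ext h)]
    refine Finset.sum_congr rfl fun u _ => ?_
    rw [eZMod_eq, AddChar.mulShift_apply]
    congr 1
    simp only [legendreSym, hχ, MulChar.ringHomComp_apply, eq_intCast]
    congr 1
    push_cast
    rw [ZMod.natCast_val, ZMod.cast_id]
  rw [hsum]
  -- absolute value of the Gauss sum
  have hG2 : (gaussSum χ ψ) ^ 2 = χ (-1) * (Fintype.card (ZMod q)) :=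
    gaussSum_sq hχ1 hχ2 hψ
  have habsG : ‖gaussSum χ ψ‖ = Real.sqrt q := by
    have h1 : ‖gaussSum χ ψ‖ ^ 2 = q := by
      rw [← norm_pow, hG2, norm_mul]
      have : ((-1 : ZMod q)) = ((-1 : (ZMod q)ˣ) : ZMod q) := by simp
      rw [this, habsu, one_mul, ZMod.card]
      simp
    rw [← h1, Real.sqrt_sq (norm_nonneg _)]
  have hshift : χ ↑b' * gaussSum χ (ψ.mulShift b) = gaussSum χ ψ := by
    have h := gaussSum_mulShift χ ψ b'
    rwa [hb.unit_spec] at h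
  have habsG' : ‖gaussSum χ (ψ.mulShift b)‖ = Real.sqrt q := by
    have := congrArg (‖·‖) hshift
    rwa [norm_mul, habsu, one_mul, habsG] at this
  rw [habsG', Real.sqrt_eq_rpow]

theorem salie_sum_bound_degenerate (p β : ℕ) [Fact p.Prime] (hodd : Odd p) (hβ : 1 ≤ β)
    (a b : ZMod (p ^ β)) (ha : (p : ZMod (p ^ β)) ∣ a) (hb : IsUnit b) :
    ‖(∑ x : (ZMod (p ^ β))ˣ,
        (legendreSym p ((x : ZMod (p ^ β)).val) : ℂ) *
          eZMod (p ^ β) (a * ((x⁻¹ : (ZMod (p ^ β))ˣ) : ZMod (p ^ β)) +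
            b * (x : ZMod (p ^ β))))‖ ≤
      (p : ℝ) ^ ((β : ℝ) / 2) := by
  have hp : p.Prime := Fact.out
  haveI : NeZero (p ^ β) := ⟨pow_ne_zero _ hp.ne_zero⟩
  by_cases hβ2 : 2 ≤ β
  case neg =>
    -- β = 1 : Gauss sum case
    have hβ1 : β = 1 := by omega
    have hpp : p ^ β = p := by rw [hβ1, pow_one]
    have ha0 : a = 0 := by
      have h0 : (p : ZMod (p ^ β)) = 0 := by
        rw [ZMod.natCast_eq_zero_iff, hpp]
      rw [h0, zero_dvd_iff] at ha
      exact ha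
    have := aux1 p (p ^ β) hpp hodd b hb
    calc ‖(∑ x : (ZMod (p ^ β))ˣ,
            (legendreSym p ((x : ZMod (p ^ β)).val) : ℂ) *
              eZMod (p ^ β) (a * ((x⁻¹ : (ZMod (p ^ β))ˣ) : ZMod (p ^ β)) +
                b * (x : ZMod (p ^ β))))‖
        = ‖(∑ x : (ZMod (p ^ β))ˣ,
            (legendreSym p ((x : ZMod (p ^ β)).val) : ℂ) * eZMod (p ^ β) (b * x))‖ := by
          congr 1
          refine Finset.sum_congr rfl fun x _ => ?_
          rw [ha0, zero_mul, zero_add]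
      _ ≤ (p : ℝ) ^ ((1:ℝ) / 2) := this
      _ = (p : ℝ) ^ ((β : ℝ) / 2) := by rw [hβ1]; norm_num
  case pos =>
    -- β ≥ 2 : the sum vanishes
    set ψ : AddChar (ZMod (p ^ β)) ℂ := ZMod.stdAddChar with hψdef
    set c : ZMod (p ^ β) := ((p ^ (β - 1) : ℕ) : ZMod (p ^ β)) with hc
    have hc0 : c ≠ 0 := by
      rw [hc, Ne, ZMod.natCast_eq_zero_iff]
      intro hdvd
      have h1 := Nat.le_of_dvd (pow_pos hp.pos _) hdvd
      exact absurd h1 (not_le.mpr (Nat.pow_lt_pow_right hp.one_lt (by omega)))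
    have hmul : (p : ℕ) * p ^ (β - 1) = p ^ β := by
      rw [← pow_succ']
      congr 1
      omega
    have hpc : (p : ZMod (p ^ β)) * c = 0 := by
      rw [hc, ← Nat.cast_mul, hmul, ZMod.natCast_self]
    have hca : c * a = 0 := by
      obtain ⟨d, rfl⟩ := ha
      rw [show c * ((p : ZMod (p ^ β)) * d) = ((p : ZMod (p ^ β)) * c) * d by ring, hpc,
        zero_mul]
    have hcc : c * c = 0 := by
      rw [hc, ← Nat.cast_mul, ← pow_add, ZMod.natCast_eq_zero_iff]
      exact pow_dvd_pow p (by omega)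
    have hu : ∀ t : ℕ, ((1 : ZMod (p ^ β)) + c * t) * (1 - c * t) = 1 := by
      intro t
      linear_combination (-((t : ZMod (p ^ β)) ^ 2)) * hcc
    set u : ℕ → (ZMod (p ^ β))ˣ := fun t => Units.mkOfMulEqOne _ _ (hu t) with hudef
    have huval : ∀ t : ℕ, (u t : ZMod (p ^ β)) = 1 + c * t := fun t => rfl
    have huinv : ∀ t : ℕ, (((u t)⁻¹ : (ZMod (p ^ β))ˣ) : ZMod (p ^ β)) = 1 - c * t :=
      fun t => rfl
    have hdvd : p ∣ p ^ β := dvd_pow_self p (by omega)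
    have hcast : ∀ y : ZMod (p ^ β), ((y.val : ℤ) : ZMod p) = ZMod.castHom hdvd (ZMod p) y := by
      intro y
      rw [Int.cast_natCast, ZMod.natCast_val, ZMod.castHom_apply]
    have hcastc : (ZMod.castHom hdvd (ZMod p)) c = 0 := by
      rw [hc, map_natCast, ZMod.natCast_eq_zero_iff]
      exact dvd_pow_self p (by omega)
    have hηu : ∀ (x : (ZMod (p ^ β))ˣ) (t : ℕ),
        (legendreSym p ((((x * u t : (ZMod (p ^ β))ˣ) : ZMod (p ^ β))).val) : ℂ)
          = (legendreSym p ((x : ZMod (p ^ β)).val) : ℂ) := by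
      intro x t
      simp only [legendreSym]
      rw [hcast, hcast, Units.val_mul, huval, map_mul (ZMod.castHom hdvd (ZMod p)), map_add,
        map_mul (ZMod.castHom hdvd (ZMod p)), hcastc, zero_mul, add_zero, map_one, mul_one]
    set f : (ZMod (p ^ β))ˣ → ℂ := fun x =>
      (legendreSym p ((x : ZMod (p ^ β)).val) : ℂ) *
        eZMod (p ^ β) (a * ((x⁻¹ : (ZMod (p ^ β))ˣ) : ZMod (p ^ β)) + b * x) with hf
    show ‖∑ x, f x‖ ≤ (p : ℝ) ^ ((β : ℝ) / 2)
    set S : ℂ := ∑ x, f x with hS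
    have key : ∀ t ∈ Finset.range p, S = ∑ x : (ZMod (p ^ β))ˣ,
        f x * (ψ (c * (b * (x : ZMod (p ^ β))))) ^ t := by
      intro t _
      rw [hS, ← Equiv.sum_comp (Equiv.mulRight (u t)) f]
      refine Finset.sum_congr rfl fun x _ => ?_
      simp only [Equiv.coe_mulRight, hf]
      rw [hηu x t]
      have hphase : a * (((x * u t)⁻¹ : (ZMod (p ^ β))ˣ) : ZMod (p ^ β)) +
          b * ((x * u t : (ZMod (p ^ β))ˣ) : ZMod (p ^ β))
          = (a * ((x⁻¹ : (ZMod (p ^ β))ˣ) : ZMod (p ^ β)) + b * x) +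
            t • (c * (b * (x : ZMod (p ^ β)))) := by
        rw [mul_inv, Units.val_mul, Units.val_mul, huinv, huval, nsmul_eq_mul]
        linear_combination (-((x⁻¹ : (ZMod (p ^ β))ˣ) : ZMod (p ^ β)) * (t : ZMod (p ^ β))) * hca
      rw [eZMod_eq, eZMod_eq, hphase, AddChar.map_add_eq_mul, AddChar.map_nsmul_eq_pow,
        mul_assoc]
    have hζ : ∀ x : (ZMod (p ^ β))ˣ,
        ∑ t ∈ Finset.range p, (ψ (c * (b * (x : ZMod (p ^ β))))) ^ t = 0 := by
      intro x
      have hζp : (ψ (c * (b * (x : ZMod (p ^ β))))) ^ p = 1 := by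
        rw [← AddChar.map_nsmul_eq_pow, nsmul_eq_mul,
          show (p : ZMod (p ^ β)) * (c * (b * (x : ZMod (p ^ β))))
            = ((p : ZMod (p ^ β)) * c) * (b * (x : ZMod (p ^ β))) by ring, hpc, zero_mul,
          AddChar.map_zero_eq_one]
      have hζ1 : (ψ (c * (b * (x : ZMod (p ^ β))))) ≠ 1 := by
        intro h
        have h0 : ψ (c * (b * (x : ZMod (p ^ β)))) = ψ 0 := by
          rw [h, AddChar.map_zero_eq_one]
        have h1 : c * (b * (x : ZMod (p ^ β))) = 0 := ZMod.injective_stdAddChar h0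
        have hbx : IsUnit (b * (x : ZMod (p ^ β))) := hb.mul x.isUnit
        rw [← mul_assoc] at h1
        rw [mul_assoc] at h1
        exact hc0 ((IsUnit.mul_left_eq_zero hbx).mp h1)
      rw [geom_sum_eq hζ1, hζp, sub_self, zero_div]
    have hpS : (p : ℂ) * S = 0 := by
      calc (p : ℂ) * S = ∑ _t ∈ Finset.range p, S := by
            rw [Finset.sum_const, Finset.card_range, nsmul_eq_mul]
        _ = ∑ t ∈ Finset.range p, ∑ x : (ZMod (p ^ β))ˣ,
              f x * (ψ (c * (b * (x : ZMod (p ^ β))))) ^ t := Finset.sum_congr rfl key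
        _ = ∑ x : (ZMod (p ^ β))ˣ, ∑ t ∈ Finset.range p,
              f x * (ψ (c * (b * (x : ZMod (p ^ β))))) ^ t := Finset.sum_comm
        _ = ∑ x : (ZMod (p ^ β))ˣ,
              f x * ∑ t ∈ Finset.range p, (ψ (c * (b * (x : ZMod (p ^ β))))) ^ t := by
            simp [Finset.mul_sum]
        _ = 0 := Finset.sum_eq_zero fun x _ => by rw [hζ x, mul_zero]
    have hS0 : S = 0 := by
      rcases mul_eq_zero.mp hpS with h | h
      · exact absurd h (by exact_mod_cast hp.ne_zero)
      · exact h
    rw [hS0, norm_zero]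
    positivity
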